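/- Let T be a tree with positive edge weights and no degree-2 vertices, let u, v be distinct leaves of T, and let w be an internal vertex of the unique u-v-path p in T. Then z(u,v) ≤ ℓ(w), where z(u,v) := d(u,v) + Σ_{x ∈ L(T)} d(x,p), and equality holds if and only if p = (u, w, v), i.e., u and v form a cherry with mid-point w. -/

import Mathlib

open SimpleGraph Finset

noncomputable section

variable {V : Type*}

/-- The weight of a walk: sum of the weights of its edges. -/
def walkWeight {G : SimpleGraph V} (w : Sym2 V → ℝ) {x y : V} (p : G.Walk x y) : ℝ :=
  (p.edges.map w).sum

/-- The unique path between two vertices of a tree. -/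
noncomputable def tpath {G : SimpleGraph V} (hT : G.IsTree) (x y : V) : G.Walk x y :=
  (hT.existsUnique_path x y).choose

/-- The weighted distance between two vertices of a tree: the weight of the unique path. -/
noncomputable def tdist {G : SimpleGraph V} (hT : G.IsTree) (w : Sym2 V → ℝ) (x y : V) : ℝ :=
  walkWeight w (tpath hT x y)

/-- The distance from a vertex `x` to a path `p`: the minimum distance from `x`
to a vertex on `p`. -/
noncomputable def distToPath {G : SimpleGraph V} (hT : G.IsTree) (w : Sym2 V → ℝ)
    (x : V) {a b : V} (p : G.Walk a b) : ℝ :=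
  sInf {r | ∃ y ∈ p.support, r = tdist hT w x y}

/-- The set of leaves of a graph. -/
def leaves (G : SimpleGraph V) [Fintype V] [DecidableRel G.Adj] : Finset V :=
  Finset.univ.filter (fun v => G.degree v = 1)

variable {G : SimpleGraph V}

lemma tpath_isPath (hT : G.IsTree) (x y : V) : (tpath hT x y).IsPath :=
  (hT.existsUnique_path x y).choose_spec.1

lemma tpath_eq (hT : G.IsTree) {x y : V} (q : G.Walk x y) (hq : q.IsPath) :
    q = tpath hT x y :=
  (hT.existsUnique_path x y).choose_spec.2 q hq

lemma tpath_self (hT : G.IsTree) (x : V) : tpath hT x x = .nil :=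
  (tpath_eq hT .nil Walk.IsPath.nil).symm

lemma tdist_eq (hT : G.IsTree) (w : Sym2 V → ℝ) {x y : V} (q : G.Walk x y) (hq : q.IsPath) :
    tdist hT w x y = walkWeight w q := by
  rw [tdist, ← tpath_eq hT q hq]

lemma walkWeight_nonneg (w : Sym2 V → ℝ) (hw : ∀ e ∈ G.edgeSet, 0 < w e)
    {x y : V} (q : G.Walk x y) : 0 ≤ walkWeight w q := by
  apply List.sum_nonneg
  intro r hr
  simp only [List.mem_map] at hr
  obtain ⟨e, he, rfl⟩ := hr
  exact (hw e (q.edges_subset_edgeSet he)).le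

lemma tdist_nonneg (hT : G.IsTree) (w : Sym2 V → ℝ) (hw : ∀ e ∈ G.edgeSet, 0 < w e)
    (x y : V) : 0 ≤ tdist hT w x y :=
  walkWeight_nonneg w hw _

lemma tdist_self (hT : G.IsTree) (w : Sym2 V → ℝ) (x : V) : tdist hT w x x = 0 := by
  rw [tdist, tpath_self]
  simp [walkWeight]

lemma tdist_pos (hT : G.IsTree) (w : Sym2 V → ℝ) (hw : ∀ e ∈ G.edgeSet, 0 < w e)
    {x y : V} (hxy : x ≠ y) : 0 < tdist hT w x y := by
  have h : (tpath hT x y).edges ≠ [] := by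
    intro h
    have : (tpath hT x y).length = 0 := by
      rw [← Walk.length_edges, h]; rfl
    exact hxy (Walk.eq_of_length_eq_zero this)
  apply List.sum_pos
  · intro r hr
    simp only [List.mem_map] at hr
    obtain ⟨e, he, rfl⟩ := hr
    exact hw e (Walk.edges_subset_edgeSet _ he)
  · simpa using h

lemma walkWeight_append (w : Sym2 V → ℝ) {x y z : V} (p : G.Walk x y) (q : G.Walk y z) :
    walkWeight w (p.append q) = walkWeight w p + walkWeight w q := by
  unfold walkWeight
  rw [Walk.edges_append, List.map_append, List.sum_append]

lemma tdist_symm (hT : G.IsTree) (w : Sym2 V → ℝ) (x y : V) :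
    tdist hT w x y = tdist hT w y x := by
  rw [tdist_eq hT w (tpath hT x y).reverse ((tpath_isPath hT x y).reverse)]
  unfold tdist walkWeight
  rw [Walk.edges_reverse, List.map_reverse, List.sum_reverse]

lemma tdist_add (hT : G.IsTree) (w : Sym2 V → ℝ) {x z : V} (q : G.Walk x z) (hq : q.IsPath)
    {y : V} (hy : y ∈ q.support) :
    tdist hT w x y + tdist hT w y z = tdist hT w x z := by
  classical
  rw [tdist_eq hT w _ (hq.takeUntil hy), tdist_eq hT w _ (hq.dropUntil hy),
      tdist_eq hT w q hq, ← walkWeight_append]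
  rw [Walk.take_spec q hy]

lemma distToPath_spec (hT : G.IsTree) (w : Sym2 V → ℝ) (x : V) {a b : V} (p : G.Walk a b) :
    (∃ y ∈ p.support, distToPath hT w x p = tdist hT w x y) ∧
      ∀ y ∈ p.support, distToPath hT w x p ≤ tdist hT w x y := by
  have hset : {r | ∃ y ∈ p.support, r = tdist hT w x y}
      = (fun y => tdist hT w x y) '' {y | y ∈ p.support} := by
    ext r
    simp [eq_comm]
  have hfin : {r | ∃ y ∈ p.support, r = tdist hT w x y}.Finite := by
    rw [hset]
    exact (p.support.finite_toSet).image _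
  have hne : {r | ∃ y ∈ p.support, r = tdist hT w x y}.Nonempty :=
    ⟨tdist hT w x a, a, p.start_mem_support, rfl⟩
  constructor
  · have := hne.csInf_mem hfin
    obtain ⟨y, hy, hr⟩ := this
    exact ⟨y, hy, hr⟩
  · intro y hy
    exact csInf_le hfin.bddBelow ⟨y, hy, rfl⟩

lemma distToPath_le (hT : G.IsTree) (w : Sym2 V → ℝ) (x : V) {a b : V} (p : G.Walk a b)
    {y : V} (hy : y ∈ p.support) : distToPath hT w x p ≤ tdist hT w x y :=
  (distToPath_spec hT w x p).2 y hy

lemma distToPath_nonneg (hT : G.IsTree) (w : Sym2 V → ℝ) (hw : ∀ e ∈ G.edgeSet, 0 < w e)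
    (x : V) {a b : V} (p : G.Walk a b) : 0 ≤ distToPath hT w x p := by
  obtain ⟨y, _, hr⟩ := (distToPath_spec hT w x p).1
  rw [hr]
  exact tdist_nonneg hT w hw x y

lemma distToPath_zero (hT : G.IsTree) (w : Sym2 V → ℝ) (hw : ∀ e ∈ G.edgeSet, 0 < w e)
    {x : V} {a b : V} (p : G.Walk a b) (hx : x ∈ p.support) : distToPath hT w x p = 0 := by
  refine le_antisymm ?_ (distToPath_nonneg hT w hw x p)
  have := distToPath_le hT w x p hx
  rwa [tdist_self] at this

lemma distToPath_reverse (hT : G.IsTree) (w : Sym2 V → ℝ) (x : V) {a b : V} (p : G.Walk a b) :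
    distToPath hT w x p.reverse = distToPath hT w x p := by
  unfold distToPath
  congr 1
  ext r
  simp [Walk.support_reverse]

lemma getVert_one_mem_support_tail {x y : V} (p : G.Walk x y) (hp : ¬ p.Nil) :
    p.getVert 1 ∈ p.support.tail := by
  rw [← Walk.cons_support_tail hp, List.tail_cons]
  exact p.tail.start_mem_support

lemma getVert_one_mem_support {x y : V} (p : G.Walk x y) (hp : ¬ p.Nil) :
    p.getVert 1 ∈ p.support :=
  List.mem_of_mem_tail (getVert_one_mem_support_tail p hp)

/-- If `b` is a neighbor of the start `a` of a path `r` and `b` lies on `r`,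
then `b` is the second vertex of `r`. -/
lemma adj_start_mem (hT : G.IsTree) {a z : V} (r : G.Walk a z) (hr : r.IsPath)
    {b : V} (hb : G.Adj a b) (hbr : b ∈ r.support) : r.getVert 1 = b := by
  classical
  have hsingle : (Walk.cons hb Walk.nil : G.Walk a b).IsPath := by
    simp [hb.ne]
  have h1 : r.takeUntil b hbr = Walk.cons hb Walk.nil :=
    (tpath_eq hT _ (hr.takeUntil hbr)).trans (tpath_eq hT _ hsingle).symm
  have h2 : r = Walk.cons hb (r.dropUntil b hbr) := by
    conv_lhs => rw [← Walk.take_spec r hbr, h1]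
    rfl
  rw [h2, Walk.getVert_cons_succ, Walk.getVert_zero]

/-- The support of the tree-path between two vertices of a path `p` is contained
in the support of `p`. -/
lemma tpath_support_subset (hT : G.IsTree) {u v : V} (p : G.Walk u v) (hp : p.IsPath)
    {c d : V} (hc : c ∈ p.support) (hd : d ∈ p.support) :
    ∀ y ∈ (tpath hT c d).support, y ∈ p.support := by
  classical
  intro y hy
  have hsplit := Walk.take_spec p hc
  have hd' : d ∈ ((p.takeUntil c hc).append (p.dropUntil c hc)).support := by
    rwa [hsplit]
  rcases (Walk.mem_support_append_iff _ _).1 hd' with hdt | hdd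
  · -- d in the first part; use the reverse of the first part
    have htp : (p.takeUntil c hc).reverse.IsPath := (hp.takeUntil hc).reverse
    have hdt' : d ∈ (p.takeUntil c hc).reverse.support := by
      rwa [Walk.support_reverse, List.mem_reverse]
    have h1 : (tpath hT c d) = (p.takeUntil c hc).reverse.takeUntil d hdt' :=
      (tpath_eq hT _ (htp.takeUntil hdt')).symm
    rw [h1] at hy
    have h2 := Walk.support_takeUntil_subset _ hdt' hy
    rw [Walk.support_reverse, List.mem_reverse] at h2
    exact Walk.support_takeUntil_subset p hc h2
  · have hdp : (p.dropUntil c hc).IsPath := hp.dropUntil hc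
    have h1 : (tpath hT c d) = (p.dropUntil c hc).takeUntil d hdd :=
      (tpath_eq hT _ (hdp.takeUntil hdd)).symm
    rw [h1] at hy
    exact Walk.support_dropUntil_subset p hc (Walk.support_takeUntil_subset _ hdd hy)

lemma exists_adj_of_ne (hT : G.IsTree) {a b : V} (hab : a ≠ b) (x : V) :
    ∃ c, G.Adj x c := by
  by_cases h : x = a
  · subst h
    obtain ⟨W⟩ := hT.isConnected.preconnected x b
    cases W with
    | nil => exact absurd rfl hab
    | cons h _ => exact ⟨_, h⟩
  · obtain ⟨W⟩ := hT.isConnected.preconnected x a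
    cases W with
    | nil => exact absurd rfl h
    | cons h _ => exact ⟨_, h⟩

lemma three_le_degree [Fintype V] [DecidableRel G.Adj] (hT : G.IsTree)
    (hdeg : ∀ x : V, G.degree x ≠ 2) {a b : V} (hab : a ≠ b) (x : V)
    (hx : G.degree x ≠ 1) : 3 ≤ G.degree x := by
  obtain ⟨c, hc⟩ := exists_adj_of_ne hT hab x
  have h1 : 0 < G.degree x := by
    rw [G.degree_pos_iff_exists_adj]
    exact ⟨c, hc⟩
  have h2 := hdeg x
  omega

/-- In every branch hanging off a vertex, there is a leaf. -/
lemma branchLeaf [Fintype V] [DecidableRel G.Adj] (hT : G.IsTree) (w : Sym2 V → ℝ)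
    (hw : ∀ e ∈ G.edgeSet, 0 < w e) (hdeg : ∀ x : V, G.degree x ≠ 2)
    {a b : V} (hab : G.Adj a b) :
    ∃ x ∈ leaves G, a ∉ (tpath hT b x).support := by
  classical
  set F : Finset V := Finset.univ.filter (fun y => a ∉ (tpath hT b y).support) with hF
  have hbF : b ∈ F := by
    simp only [hF, Finset.mem_filter, Finset.mem_univ, true_and]
    rw [tpath_self]
    simp [hab.ne]
  obtain ⟨x, hxF, hmax⟩ := F.exists_max_image (fun y => tdist hT w b y) ⟨b, hbF⟩
  have hax : a ∉ (tpath hT b x).support := by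
    simpa [hF] using hxF
  by_cases hleaf : G.degree x = 1
  · exact ⟨x, by simp [leaves, hleaf], hax⟩
  exfalso
  have hdx : 3 ≤ G.degree x := three_le_degree hT hdeg hab.ne x hleaf
  set q : G.Walk b x := tpath hT b x with hq
  have hqp : q.IsPath := tpath_isPath hT b x
  set pen : V := q.reverse.getVert 1 with hpen
  -- pick a neighbor of x avoiding a and pen
  have hns : ¬ (G.neighborFinset x ⊆ {a, pen}) := by
    intro hsub
    have h1 := Finset.card_le_card hsub
    have h2 : ({a, pen} : Finset V).card ≤ 2 := Finset.card_insert_le _ _ |>.trans (by simp)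
    rw [G.card_neighborFinset_eq_degree] at h1
    omega
  obtain ⟨c, hc, hcn⟩ := Finset.not_subset.1 hns
  have hxc : G.Adj x c := by rwa [SimpleGraph.mem_neighborFinset] at hc
  simp only [Finset.mem_insert, Finset.mem_singleton, not_or] at hcn
  obtain ⟨hca, hcpen⟩ := hcn
  -- c is not on q
  have hcq : c ∉ q.support := by
    intro hcq
    have hcr : c ∈ q.reverse.support := by
      rwa [Walk.support_reverse, List.mem_reverse]
    exact hcpen (adj_start_mem hT q.reverse hqp.reverse hxc hcr).symm
  -- extend q by the edge x-c
  have hq' : (q.concat hxc).IsPath := by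
    rw [Walk.isPath_def, Walk.support_concat, List.nodup_append']
    refine ⟨hqp.support_nodup, List.nodup_singleton c, ?_⟩
    intro y hy hy'
    simp only [List.mem_singleton] at hy'
    subst hy'
    exact hcq hy
  have hcF : c ∈ F := by
    simp only [hF, Finset.mem_filter, Finset.mem_univ, true_and]
    rw [← tpath_eq hT _ hq']
    rw [Walk.support_concat]
    simp only [List.mem_append, List.mem_singleton, not_or]
    exact ⟨hax, Ne.symm hca⟩
  have hle := hmax c hcF
  have e1 : tdist hT w b c = walkWeight w q + w s(x, c) := by
    rw [tdist_eq hT w _ hq']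
    unfold walkWeight
    rw [Walk.edges_concat, List.concat_eq_append, List.map_append, List.sum_append]
    simp
  have e2 : tdist hT w b x = walkWeight w q := tdist_eq hT w q hqp
  have hwp : 0 < w s(x, c) := hw _ (G.mem_edgeSet.2 hxc)
  rw [e1, e2] at hle
  linarith

/-- KEY: if the path `p` has an internal vertex `a` different from `m`, then some leaf
off `p` is strictly closer to `p` than to `m`. -/
lemma key_lemma [Fintype V] [DecidableRel G.Adj] (hT : G.IsTree) (w : Sym2 V → ℝ)
    (hw : ∀ e ∈ G.edgeSet, 0 < w e) (hdeg : ∀ x : V, G.degree x ≠ 2)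
    {u v : V} (p : G.Walk u v) (hp : p.IsPath)
    {a : V} (ha : a ∈ p.support) (hau : a ≠ u) (hav : a ≠ v)
    {m : V} (hm : m ∈ p.support) (ham : a ≠ m) :
    ∃ x ∈ leaves G, x ∉ p.support ∧ distToPath hT w x p < tdist hT w m x := by
  classical
  set t : G.Walk u a := p.takeUntil a ha with ht
  set d : G.Walk a v := p.dropUntil a ha with hd
  have htp : t.IsPath := hp.takeUntil ha
  have hdp : d.IsPath := hp.dropUntil ha
  have htnil : ¬ t.reverse.Nil := Walk.not_nil_of_ne hau
  have hdnil : ¬ d.Nil := Walk.not_nil_of_ne hav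
  set pred : V := t.reverse.getVert 1 with hpred
  set succ : V := d.getVert 1 with hsucc
  have hapred : G.Adj a pred := t.reverse.adj_snd htnil
  have hasucc : G.Adj a succ := d.adj_snd hdnil
  have hpredt : pred ∈ t.support := by
    have := getVert_one_mem_support t.reverse htnil
    rwa [Walk.support_reverse, List.mem_reverse] at this
  have hsuccd : succ ∈ d.support.tail := getVert_one_mem_support_tail d hdnil
  -- the support of p splits
  have hsupp : p.support = t.support ++ d.support.tail := by
    conv_lhs => rw [← Walk.take_spec p ha]
    exact Walk.support_append _ _
  have hnodup : (t.support ++ d.support.tail).Nodup := by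
    rw [← hsupp]; exact hp.support_nodup
  have hdisj : ∀ y, y ∈ t.support → y ∈ d.support.tail → False := by
    intro y h1 h2
    exact (List.disjoint_of_nodup_append hnodup) h1 h2
  have hps : pred ≠ succ := fun h => hdisj pred hpredt (h ▸ hsuccd)
  -- pick a neighbor b of a with b ∉ {pred, succ}
  have hns : ¬ (G.neighborFinset a ⊆ {pred, succ}) := by
    intro hsub
    have h6 : ({pred, succ} : Finset V) ⊆ G.neighborFinset a := by
      intro y hy
      simp only [Finset.mem_insert, Finset.mem_singleton] at hy
      rcases hy with rfl | rfl
      · exact (G.mem_neighborFinset _ _).2 hapred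
      · exact (G.mem_neighborFinset _ _).2 hasucc
    have hcard : ({pred, succ} : Finset V).card = 2 := by
      rw [Finset.card_insert_of_notMem (by simpa using hps), Finset.card_singleton]
    have h1 := Finset.card_le_card hsub
    have h7 := Finset.card_le_card h6
    rw [G.card_neighborFinset_eq_degree] at h1 h7
    rw [hcard] at h1 h7
    exact hdeg a (le_antisymm h1 h7)
  obtain ⟨b, hb, hbn⟩ := Finset.not_subset.1 hns
  have hab : G.Adj a b := by rwa [SimpleGraph.mem_neighborFinset] at hb
  simp only [Finset.mem_insert, Finset.mem_singleton, not_or] at hbn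
  obtain ⟨hbpred, hbsucc⟩ := hbn
  -- b is not on p
  have hbp : b ∉ p.support := by
    intro hbp
    rw [hsupp, List.mem_append] at hbp
    rcases hbp with h1 | h1
    · have h2 : b ∈ t.reverse.support := by rwa [Walk.support_reverse, List.mem_reverse]
      exact hbpred (adj_start_mem hT t.reverse htp.reverse hab h2).symm
    · have h2 : b ∈ d.support := List.mem_of_mem_tail h1
      exact hbsucc (adj_start_mem hT d hdp hab h2).symm
  -- find a leaf in the branch through b
  obtain ⟨x, hxl, haxs⟩ := branchLeaf hT w hw hdeg hab
  set s : G.Walk b x := tpath hT b x with hs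
  have hsp : s.IsPath := tpath_isPath hT b x
  -- the branch is disjoint from p
  have hdisj2 : ∀ y ∈ s.support, y ∉ p.support := by
    intro y hys hyp
    have hs1 : (s.takeUntil y hys).IsPath := hsp.takeUntil hys
    have hbnotay : b ∉ (tpath hT a y).support := by
      intro hmem
      exact hbp (tpath_support_subset hT p hp ha hyp b hmem)
    have hs2 : (Walk.cons hab.symm (tpath hT a y)).IsPath :=
      (tpath_isPath hT a y).cons hbnotay
    have heqw : s.takeUntil y hys = Walk.cons hab.symm (tpath hT a y) :=
      (tpath_eq hT _ hs1).trans (tpath_eq hT _ hs2).symm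
    have hains : a ∈ (s.takeUntil y hys).support := by
      rw [heqw, Walk.support_cons]
      exact List.mem_cons_of_mem _ (Walk.start_mem_support _)
    exact haxs (Walk.support_takeUntil_subset s hys hains)
  -- the path from m to x goes through a
  have hma : ∀ y ∈ (tpath hT m a).support, y ∈ p.support :=
    tpath_support_subset hT p hp hm ha
  have hP : ((tpath hT m a).append (Walk.cons hab s)).IsPath := by
    rw [Walk.isPath_def, Walk.support_append, Walk.support_cons, List.tail_cons,
      List.nodup_append']
    refine ⟨(tpath_isPath hT m a).support_nodup, hsp.support_nodup, ?_⟩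
    intro y h1 h2
    exact hdisj2 y h2 (hma y h1)
  have haP : a ∈ ((tpath hT m a).append (Walk.cons hab s)).support := by
    rw [Walk.mem_support_append_iff]
    exact Or.inl (Walk.end_mem_support _)
  have hadd : tdist hT w m a + tdist hT w a x = tdist hT w m x :=
    tdist_add hT w _ hP haP
  refine ⟨x, hxl, ?_, ?_⟩
  · exact hdisj2 x (Walk.end_mem_support s)
  · have h1 : distToPath hT w x p ≤ tdist hT w x a := distToPath_le hT w x p ha
    have h2 : tdist hT w x a = tdist hT w a x := tdist_symm hT w x a
    have h3 : 0 < tdist hT w m a := tdist_pos hT w hw (Ne.symm ham)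
    linarith

/-- If all leaves off `p` are as close to `p` as to `m`, then the second vertex of `p`
is `m`. -/
lemma push_lemma [Fintype V] [DecidableRel G.Adj] (hT : G.IsTree) (w : Sym2 V → ℝ)
    (hw : ∀ e ∈ G.edgeSet, 0 < w e) (hdeg : ∀ x : V, G.degree x ≠ 2)
    {u v : V} (huv : u ≠ v) (p : G.Walk u v) (hp : p.IsPath)
    {m : V} (hm : m ∈ p.support) (hmu : m ≠ u) (hmv : m ≠ v)
    (heq : ∀ x ∈ leaves G, x ∉ p.support → distToPath hT w x p = tdist hT w m x) :
    G.Adj u m := by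
  cases p with
  | nil => exact absurd rfl huv
  | cons h q =>
    rename_i c
    by_cases hcm : c = m
    · exact hcm ▸ h
    exfalso
    have hcp : c ∈ (Walk.cons h q).support := by
      rw [Walk.support_cons]
      exact List.mem_cons_of_mem _ q.start_mem_support
    have hcu : c ≠ u := h.ne'
    have hcv : c ≠ v := by
      rintro rfl
      have hqnil : q = Walk.nil := by
        rw [tpath_eq hT q hp.of_cons, tpath_self]
      rw [hqnil] at hm
      simp only [Walk.support_cons, Walk.support_nil, List.mem_cons,
        List.mem_singleton] at hm
      rcases hm with h1 | h1 | h1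
      · exact hmu h1
      · exact hmv h1
      · simp at h1
    obtain ⟨x, hxl, hxp, hlt⟩ :=
      key_lemma hT w hw hdeg (Walk.cons h q) hp hcp hcu hcv hm hcm
    exact absurd (heq x hxl hxp) (ne_of_lt hlt)

/-- If `u` is a leaf with neighbor `m`, every walk from `u` to another vertex
passes through `m`. -/
lemma leaf_neighbor_mem [Fintype V] [DecidableRel G.Adj]
    (hu : G.degree u = 1) {m : V} (hum : G.Adj u m) {x : V} (hxu : x ≠ u)
    (W : G.Walk u x) : m ∈ W.support := by
  cases W with
  | nil => exact absurd rfl hxu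
  | cons h q =>
    rename_i c
    have hmc : m = c := by
      have h1 : c ∈ G.neighborFinset u := (G.mem_neighborFinset _ _).2 h
      have h2 : m ∈ G.neighborFinset u := (G.mem_neighborFinset _ _).2 hum
      have h3 : (G.neighborFinset u).card ≤ 1 := by
        rw [G.card_neighborFinset_eq_degree, hu]
      exact Finset.card_le_one.1 h3 _ h2 _ h1
    rw [hmc, Walk.support_cons]
    exact List.mem_cons_of_mem _ q.start_mem_support

/-- The leaf-status of a vertex: the sum of its distances to all leaves. -/
noncomputable def leafStatus {G : SimpleGraph V} [Fintype V] [DecidableRel G.Adj]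
    (hT : G.IsTree) (w : Sym2 V → ℝ) (u : V) : ℝ :=
  ∑ x ∈ leaves G, tdist hT w u x

/-- The leaf-status of a path: the sum of the distances of all leaves to the path. -/
noncomputable def pathLeafStatus {G : SimpleGraph V} [Fintype V] [DecidableRel G.Adj]
    (hT : G.IsTree) (w : Sym2 V → ℝ) {a b : V} (p : G.Walk a b) : ℝ :=
  ∑ x ∈ leaves G, distToPath hT w x p

/-- `Lside hT w u v` is the set `L^{uv}_u` of leaves strictly closer to `u` than to `v`. -/
noncomputable def Lside {G : SimpleGraph V} [Fintype V] [DecidableRel G.Adj]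
    (hT : G.IsTree) (w : Sym2 V → ℝ) (u v : V) : Finset V :=
  (leaves G).filter (fun x => tdist hT w x u < tdist hT w x v)

/-- for distinct leaves `u, v` and an internal vertex `m` of the
unique `u`-`v`-path `p`, we have `z(u,v) ≤ ℓ(m)`, with equality iff
`p = (u, m, v)`, i.e. `u` and `v` form a cherry with mid-point `m`. -/
theorem stmt8 {V : Type*} [Fintype V] {G : SimpleGraph V} [DecidableRel G.Adj]
    (hT : G.IsTree) (w : Sym2 V → ℝ) (hw : ∀ e ∈ G.edgeSet, 0 < w e)
    (hdeg : ∀ x : V, G.degree x ≠ 2)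
    (u v : V) (hu : u ∈ leaves G) (hv : v ∈ leaves G) (huv : u ≠ v)
    (p : G.Walk u v) (hp : p.IsPath)
    (m : V) (hm : m ∈ p.support) (hmu : m ≠ u) (hmv : m ≠ v) :
    tdist hT w u v + pathLeafStatus hT w p ≤ leafStatus hT w m ∧
    (tdist hT w u v + pathLeafStatus hT w p = leafStatus hT w m ↔
      (G.Adj u m ∧ G.Adj m v)) := by
  classical
  have hul : G.degree u = 1 := by simpa [leaves] using hu
  have hvl : G.degree v = 1 := by simpa [leaves] using hv
  have hsumuv : tdist hT w u m + tdist hT w m v = tdist hT w u v :=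
    tdist_add hT w p hp hm
  set rest : Finset V := (leaves G) \ {u, v} with hrest
  have hsplit : ∀ f : V → ℝ, ∑ x ∈ leaves G, f x = f u + f v + ∑ x ∈ rest, f x := by
    intro f
    have h1 : leaves G = insert u (insert v rest) := by
      ext y
      simp only [hrest, Finset.mem_insert, Finset.mem_sdiff, Finset.mem_insert,
        Finset.mem_singleton]
      constructor
      · intro hy
        tauto
      · rintro (rfl | rfl | hy)
        · exact hu
        · exact hv
        · tauto
    have h2 : u ∉ insert v rest := by
      simp [hrest, huv]
    have h3 : v ∉ rest := by
      simp [hrest]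
    rw [h1, Finset.sum_insert h2, Finset.sum_insert h3]
    ring
  have hmem_rest : ∀ y, y ∈ rest ↔ y ∈ leaves G ∧ y ≠ u ∧ y ≠ v := by
    intro y
    simp only [hrest, Finset.mem_sdiff, Finset.mem_insert, Finset.mem_singleton]
    tauto
  have hDu : distToPath hT w u p = 0 := distToPath_zero hT w hw p p.start_mem_support
  have hDv : distToPath hT w v p = 0 := distToPath_zero hT w hw p p.end_mem_support
  have hls : leafStatus hT w m = tdist hT w u v + ∑ x ∈ rest, tdist hT w m x := by
    rw [leafStatus, hsplit, tdist_symm hT w m u, ← hsumuv]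
  have hpls : pathLeafStatus hT w p = ∑ x ∈ rest, distToPath hT w x p := by
    rw [pathLeafStatus, hsplit, hDu, hDv]
    ring
  have hterm : ∀ x ∈ rest, distToPath hT w x p ≤ tdist hT w m x := by
    intro x _
    calc distToPath hT w x p ≤ tdist hT w x m := distToPath_le hT w x p hm
    _ = tdist hT w m x := tdist_symm hT w x m
  have hsumle : ∑ x ∈ rest, distToPath hT w x p ≤ ∑ x ∈ rest, tdist hT w m x :=
    Finset.sum_le_sum hterm
  constructor
  · rw [hls, hpls]
    linarith
  constructor
  · -- equality implies cherry
    intro heqz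
    rw [hls, hpls] at heqz
    have hsum : ∑ x ∈ rest, distToPath hT w x p = ∑ x ∈ rest, tdist hT w m x := by
      linarith
    have hterm_eq := (Finset.sum_eq_sum_iff_of_le hterm).1 hsum
    have heq' : ∀ x ∈ leaves G, x ∉ p.support → distToPath hT w x p = tdist hT w m x := by
      intro x hx hxp
      apply hterm_eq
      rw [hmem_rest]
      exact ⟨hx, fun h => hxp (h ▸ p.start_mem_support),
        fun h => hxp (h ▸ p.end_mem_support)⟩
    have h1 : G.Adj u m := push_lemma hT w hw hdeg huv p hp hm hmu hmv heq'
    have h2 : G.Adj v m := by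
      have hm' : m ∈ p.reverse.support := by
        rwa [Walk.support_reverse, List.mem_reverse]
      refine push_lemma hT w hw hdeg huv.symm p.reverse hp.reverse hm' hmv hmu ?_
      intro x hx hxp
      rw [distToPath_reverse]
      apply heq' x hx
      intro hxs
      exact hxp (by rwa [Walk.support_reverse, List.mem_reverse])
    exact ⟨h1, h2.symm⟩
  · -- cherry implies equality
    rintro ⟨hum, hmv'⟩
    have hp0 : (Walk.cons hum (Walk.cons hmv' Walk.nil)).IsPath := by
      simp [hum.ne, hmv'.ne, huv]
    have hpe : p = Walk.cons hum (Walk.cons hmv' Walk.nil) :=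
      (tpath_eq hT p hp).trans (tpath_eq hT _ hp0).symm
    have hsupport : p.support = [u, m, v] := by
      rw [hpe]
      simp [Walk.support_cons]
    have hterm_eq : ∀ x ∈ rest, distToPath hT w x p = tdist hT w m x := by
      intro x hx
      refine le_antisymm (hterm x hx) ?_
      rw [hmem_rest] at hx
      obtain ⟨hxleaf, hxu, hxv⟩ := hx
      obtain ⟨y, hy, hr⟩ := (distToPath_spec hT w x p).1
      rw [hr]
      rw [hsupport] at hy
      simp only [List.mem_cons, List.mem_singleton, List.not_mem_nil, or_false] at hy
      rcases hy with h | h | h <;> rw [h]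
      · -- y = u
        have hmem : m ∈ (tpath hT u x).support :=
          leaf_neighbor_mem hul hum hxu (tpath hT u x)
        have hadd : tdist hT w u m + tdist hT w m x = tdist hT w u x :=
          tdist_add hT w _ (tpath_isPath hT u x) hmem
        have hsym : tdist hT w x u = tdist hT w u x := tdist_symm hT w x u
        have hnn : 0 ≤ tdist hT w u m := tdist_nonneg hT w hw u m
        linarith
      · -- y = m
        exact (tdist_symm hT w m x).le
      · -- y = v
        have hmem : m ∈ (tpath hT v x).support :=
          leaf_neighbor_mem hvl hmv'.symm hxv (tpath hT v x)
        have hadd : tdist hT w v m + tdist hT w m x = tdist hT w v x :=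
          tdist_add hT w _ (tpath_isPath hT v x) hmem
        have hsym : tdist hT w x v = tdist hT w v x := tdist_symm hT w x v
        have hnn : 0 ≤ tdist hT w v m := tdist_nonneg hT w hw v m
        linarith
    rw [hls, hpls, Finset.sum_congr rfl hterm_eq]
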